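/- Let n = n_0 + n_1 + ... + n_r be a composition of n with n_0 ≥ 0 and n_i > 0 for i ≥ 1, and let x : Fin n → ℕ be the 'block-constant' function taking the value t on the t-th block (so x takes the value t on exactly n_t indices, for t = 0,1,...,r). Consider the set of signed pairs R = {ε·e_i + δ·e_j : 1 ≤ i < j ≤ n, ε, δ ∈ {+1,−1}}, where a signed pair α = ε·e_i + δ·e_j evaluates on x as α(x) = ε·x(i) + δ·x(j). Then the number of elements α ∈ R with α(x) > 0 equals Σ_{t=1}^{r} C(n_t, 2) + 2·Σ_{0 ≤ s < t ≤ r} n_s·n_t. -/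

import Mathlib

/-- count of sign pairs making `ε a + δ b > 0`. -/
private def spf (a b : ℕ) : ℕ := if a = b then (if a = 0 then 0 else 1) else 2

private lemma spf_comm (a b : ℕ) : spf a b = spf b a := by
  unfold spf; rcases eq_or_ne a b with h | h
  · subst h; rfl
  · simp [h, Ne.symm h]

private lemma spf_sum (a b : ℕ) :
    (∑ e : Bool × Bool, if 0 < (if e.1 then (1 : ℤ) else -1) * (a : ℤ) +
        (if e.2 then (1 : ℤ) else -1) * (b : ℤ) then 1 else 0) = spf a b := by
  rw [Fintype.sum_prod_type]
  simp only [Fintype.sum_bool, if_true, if_false, spf]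
  split_ifs <;> first | omega | exact (False.elim ‹False›)

private lemma two_mul_choose_two (m : ℕ) : 2 * Nat.choose m 2 = m * (m - 1) := by
  induction m with
  | zero => rfl
  | succ k ih =>
    rw [Nat.choose_succ_succ, Nat.mul_add, ih, Nat.choose_one_right, Nat.succ_sub_one]
    cases k with
    | zero => rfl
    | succ l => rw [Nat.succ_sub_one]; ring

private lemma sq_split (m f : ℕ) : m * (m * f) = m * ((m - 1) * f) + m * f := by
  cases m with
  | zero => simp
  | succ k => rw [Nat.succ_sub_one]; ring

private lemma double_sum_split {α : Type*} [Fintype α] [LinearOrder α]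
    (G : α → α → ℕ) (hG : ∀ a b, G a b = G b a) :
    ∑ a, ∑ b, G a b
      = 2 * (∑ a, ∑ b, if a < b then G a b else 0) + ∑ a, G a a := by
  have h1 : ∑ a, ∑ b, G a b
      = ∑ a, ∑ b, ((if a < b then G a b else 0) + (if b < a then G a b else 0)
          + (if a = b then G a b else 0)) := by
    refine Finset.sum_congr rfl fun a _ => Finset.sum_congr rfl fun b _ => ?_
    rcases lt_trichotomy a b with h | h | h
    · simp [h, h.ne, h.not_gt]
    · simp [h]
    · simp [h, h.ne', h.not_gt]
  rw [h1]
  simp only [Finset.sum_add_distrib]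
  have h2 : (∑ a : α, ∑ b, (if b < a then G a b else 0))
      = ∑ a : α, ∑ b, (if a < b then G a b else 0) := by
    rw [Finset.sum_comm]
    exact Finset.sum_congr rfl fun a _ => Finset.sum_congr rfl fun b _ => by rw [hG]
  have h3 : (∑ a : α, ∑ b, (if a = b then G a b else 0)) = ∑ a, G a a := by
    refine Finset.sum_congr rfl fun a _ => ?_
    simp
  rw [h2, h3]; ring

/-- Counting the signed pairs `ε·e_i + δ·e_j` (i < j, ε, δ ∈ {±1}) that are positive on the
block-constant function `x` attached to a composition `n = n_0 + n_1 + ... + n_r`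
(with `n_0 ≥ 0`, `n_t > 0` for `t ≥ 1`):
the count is `Σ_{t=1}^r C(n_t, 2) + 2 Σ_{0 ≤ s < t ≤ r} n_s n_t`. -/
theorem signed_pair_count_of_composition
    (r : ℕ) (n : Fin (r + 1) → ℕ) (hn : ∀ t : Fin (r + 1), t ≠ 0 → 0 < n t)
    (N : ℕ) (hN : N = ∑ t, n t)
    (x : Fin N → ℕ)
    (hx : ∀ t : Fin (r + 1), (Finset.univ.filter fun i : Fin N => x i = (t : ℕ)).card = n t) :
    ((Finset.univ : Finset (Fin N × Fin N × Bool × Bool)).filter fun p =>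
        p.1 < p.2.1 ∧
          0 < (if p.2.2.1 then (1 : ℤ) else -1) * (x p.1 : ℤ) +
              (if p.2.2.2 then (1 : ℤ) else -1) * (x p.2.1 : ℤ)).card
      = (∑ t ∈ Finset.univ.filter (fun t : Fin (r + 1) => t ≠ 0), Nat.choose (n t) 2)
        + 2 * ∑ q ∈ Finset.univ.filter
            (fun q : Fin (r + 1) × Fin (r + 1) => q.1 < q.2), n q.1 * n q.2 := by
  classical
  -- every value of `x` is at most `r`
  have hle : ∀ i, x i ≤ r := by
    by_contra hcon
    push_neg at hcon
    obtain ⟨i0, hi0⟩ := hcon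
    have hNpos : 0 < N := i0.pos
    set B : Fin (r + 1) → Finset (Fin N) :=
      fun t => Finset.univ.filter fun i => x i = (t : ℕ) with hB
    have hdisj : ∀ t ∈ (Finset.univ : Finset (Fin (r + 1))), ∀ s ∈ Finset.univ,
        t ≠ s → Disjoint (B t) (B s) := by
      intro t _ s _ hts
      refine Finset.disjoint_left.2 fun j hj hj' => ?_
      simp only [hB, Finset.mem_filter] at hj hj'
      exact hts (Fin.ext (by omega))
    have hcard : (Finset.univ.biUnion B).card = N := by
      rw [Finset.card_biUnion hdisj]
      simp only [hB, hx]
      exact hN.symm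
    have hsub : Finset.univ.biUnion B ⊆ Finset.univ.erase i0 := by
      intro j hj
      simp only [Finset.mem_biUnion, hB, Finset.mem_filter] at hj
      obtain ⟨t, _, _, hxj⟩ := hj
      refine Finset.mem_erase.2 ⟨?_, Finset.mem_univ _⟩
      rintro rfl
      have : (t : ℕ) ≤ r := Nat.lt_succ_iff.1 t.isLt
      omega
    have hcc := Finset.card_le_card hsub
    rw [hcard, Finset.card_erase_of_mem (Finset.mem_univ _), Finset.card_univ,
      Fintype.card_fin] at hcc
    omega
  -- fiberwise summation
  have hfib : ∀ h : ℕ → ℕ, ∑ i, h (x i) = ∑ t : Fin (r + 1), n t * h t := by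
    intro h
    rw [← Finset.sum_fiberwise (Finset.univ : Finset (Fin N))
      (fun i => (⟨x i, Nat.lt_succ_of_le (hle i)⟩ : Fin (r + 1))) (fun i => h (x i))]
    refine Finset.sum_congr rfl fun t _ => ?_
    have hset : (Finset.univ.filter
        (fun i => (⟨x i, Nat.lt_succ_of_le (hle i)⟩ : Fin (r + 1)) = t))
        = Finset.univ.filter (fun i : Fin N => x i = (t : ℕ)) := by
      ext i; simp [Fin.ext_iff]
    rw [hset, Finset.sum_congr rfl
      (fun i hi => by
        simp only [Finset.mem_filter] at hi
        rw [hi.2]),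
      Finset.sum_const, hx t, smul_eq_mul]
  -- the LHS as a double sum
  have hLHS : ((Finset.univ : Finset (Fin N × Fin N × Bool × Bool)).filter fun p =>
        p.1 < p.2.1 ∧
          0 < (if p.2.2.1 then (1 : ℤ) else -1) * (x p.1 : ℤ) +
              (if p.2.2.2 then (1 : ℤ) else -1) * (x p.2.1 : ℤ)).card
      = ∑ i : Fin N, ∑ j : Fin N, if i < j then spf (x i) (x j) else 0 := by
    rw [Finset.card_filter, Fintype.sum_prod_type]
    refine Finset.sum_congr rfl fun i _ => ?_
    rw [Fintype.sum_prod_type]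
    refine Finset.sum_congr rfl fun j _ => ?_
    by_cases hij : i < j
    · simp only [hij, true_and, if_true]
      exact spf_sum (x i) (x j)
    · simp [hij]
  rw [hLHS]
  -- double sum splits on `Fin N`
  have key1 : (∑ i : Fin N, ∑ j : Fin N, spf (x i) (x j))
      = 2 * (∑ i : Fin N, ∑ j : Fin N, if i < j then spf (x i) (x j) else 0)
        + ∑ i : Fin N, spf (x i) (x i) :=
    double_sum_split (fun i j => spf (x i) (x j)) (fun i j => spf_comm (x i) (x j))
  have hdiag : (∑ i : Fin N, spf (x i) (x i)) = ∑ t : Fin (r + 1), n t * spf t t :=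
    hfib (fun a => spf a a)
  -- double fiberwise evaluation
  have hfib2 : (∑ i : Fin N, ∑ j : Fin N, spf (x i) (x j))
      = ∑ s : Fin (r + 1), ∑ t : Fin (r + 1), n s * (n t * spf s t) := by
    have h1 : (∑ i : Fin N, ∑ j : Fin N, spf (x i) (x j))
        = ∑ i : Fin N, ∑ t : Fin (r + 1), n t * spf (x i) t :=
      Finset.sum_congr rfl fun i _ => hfib (fun b => spf (x i) b)
    have h2 := hfib (fun a => ∑ t : Fin (r + 1), n t * spf a t)
    rw [h1, h2]
    exact Finset.sum_congr rfl fun s _ => Finset.mul_sum _ _ _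
  -- double sum splits on `Fin (r+1)`
  have key2 : (∑ s : Fin (r + 1), ∑ t : Fin (r + 1), n s * (n t * spf s t))
      = 2 * (∑ s : Fin (r + 1), ∑ t : Fin (r + 1),
            if s < t then n s * (n t * spf s t) else 0)
        + ∑ t : Fin (r + 1), n t * (n t * spf t t) :=
    double_sum_split (fun s t : Fin (r + 1) => n s * (n t * spf s t))
      (fun s t => by
        show n s * (n t * spf ↑s ↑t) = n t * (n s * spf ↑t ↑s)
        rw [spf_comm]; ring)
  -- split the diagonal on the block side
  have hsq : (∑ t : Fin (r + 1), n t * (n t * spf t t))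
      = (∑ t : Fin (r + 1), n t * ((n t - 1) * spf t t))
        + ∑ t : Fin (r + 1), n t * spf t t := by
    rw [← Finset.sum_add_distrib]
    exact Finset.sum_congr rfl fun t _ => sq_split _ _
  -- evaluate the diagonal sum: it is twice the choose-sum
  have hdiag2 : (∑ t : Fin (r + 1), n t * ((n t - 1) * spf t t))
      = 2 * ∑ t ∈ Finset.univ.filter (fun t : Fin (r + 1) => t ≠ 0),
          Nat.choose (n t) 2 := by
    rw [Finset.mul_sum, Finset.sum_filter]
    refine Finset.sum_congr rfl fun t _ => ?_
    have hval : spf t t = if t = 0 then 0 else 1 := by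
      unfold spf
      simp only [if_pos rfl]
      by_cases ht : t = 0
      · simp [ht]
      · have hv : (t : ℕ) ≠ 0 := fun h => ht (Fin.ext h)
        simp [ht, hv]
    rw [hval]
    by_cases ht : t = 0
    · simp [ht]
    · rw [if_pos ht, if_neg ht, mul_one, two_mul_choose_two]
  -- evaluate the off-diagonal sum
  have hoff : (∑ s : Fin (r + 1), ∑ t : Fin (r + 1),
        if s < t then n s * (n t * spf s t) else 0)
      = 2 * ∑ q ∈ Finset.univ.filter
          (fun q : Fin (r + 1) × Fin (r + 1) => q.1 < q.2), n q.1 * n q.2 := by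
    rw [Finset.mul_sum, Finset.sum_filter, Fintype.sum_prod_type]
    refine Finset.sum_congr rfl fun s _ => ?_
    refine Finset.sum_congr rfl fun t _ => ?_
    by_cases hst : s < t
    · have hv : spf s t = 2 := by
        unfold spf
        have hne : (s : ℕ) ≠ (t : ℕ) := fun h => hst.ne (Fin.ext h)
        simp [hne]
      simp only [hst, if_true, hv]
      ring
    · simp [hst]
  omega
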